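/- arXiv:1905.03547 — 9 statements merged into one kernel-verified Lean document; each statement's English description precedes it below -/
import Mathlib

section
/- For every integer m ≥ 1, the real cube root of N = m³ + m(2m+1) satisfies N^(1/3) < m + (2m+1)/(3m+2). -/
theorem heron_bound_family (m : ℕ) (hm : 1 ≤ m) :
    ((m^3 + m*(2*m+1) : ℝ)) ^ ((1:ℝ)/3) < m + (2*m+1)/(3*m+2) := by
  have hm' : (1:ℝ) ≤ m := by exact_mod_cast hm
  set b : ℝ := m + (2*m+1)/(3*m+2) with hb
  have hd : (0:ℝ) < 3*m+2 := by nlinarith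
  have hN : (0:ℝ) ≤ m^3 + m*(2*m+1) := by positivity
  have hkey : (m^3 + m*(2*m+1) : ℝ) < b^(3:ℕ) := by
    have : b = (3*m^2+4*m+1)/(3*m+2) := by rw [hb]; field_simp; ring
    rw [this, div_pow, lt_div_iff₀ (by positivity)]
    nlinarith [sq_nonneg ((m:ℝ)-1), sq_nonneg (m:ℝ), hm']
  have hb0 : (0:ℝ) < b := by rw [hb]; positivity
  calc ((m^3 + m*(2*m+1) : ℝ)) ^ ((1:ℝ)/3)
      < (b^(3:ℕ)) ^ ((1:ℝ)/3) := by
        apply Real.rpow_lt_rpow hN hkey (by norm_num)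
    _ = b := by
        rw [← Real.rpow_natCast b 3, ← Real.rpow_mul hb0.le]
        norm_num
end

section
/- For real N with m² < N < (m+1)² (m a positive integer) and n = √N, setting d₁ = n² − m² and d₂ = (m+1)² − n², we have n < m + (m+1)d₁/((m+1)d₁ + m·d₂). -/
theorem sqrt_weighted_upper_bound (m : ℕ) (hm : 1 ≤ m) (N n d₁ d₂ : ℝ)
    (h₁ : (m:ℝ)^2 < N) (h₂ : N < ((m:ℝ)+1)^2) (hn : n = Real.sqrt N)
    (hd₁ : d₁ = n^2 - (m:ℝ)^2) (hd₂ : d₂ = ((m:ℝ)+1)^2 - n^2) :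
    n < (m:ℝ) + ((m:ℝ)+1)*d₁/(((m:ℝ)+1)*d₁ + (m:ℝ)*d₂) := by
  have hm0 : (0:ℝ) ≤ m := Nat.cast_nonneg m
  have hm1 : (1:ℝ) ≤ m := by exact_mod_cast hm
  have hn2 : n^2 = N := by
    rw [hn, Real.sq_sqrt]
    nlinarith
  have hmn : (m:ℝ) < n := by
    nlinarith [Real.sqrt_lt_sqrt (by positivity : (0:ℝ) ≤ (m:ℝ)^2) h₁,
      Real.sqrt_sq hm0, hn]
  have hnm1 : n < (m:ℝ) + 1 := by nlinarith
  have hd₁pos : 0 < d₁ := by nlinarith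
  have hd₂pos : 0 < d₂ := by nlinarith
  have hD : 0 < ((m:ℝ)+1)*d₁ + (m:ℝ)*d₂ := by positivity
  rw [← sub_lt_iff_lt_add', lt_div_iff₀ hD]
  have hkey : ((m:ℝ)+1)*d₁ + (m:ℝ)*d₂ < ((m:ℝ)+1)*(n+(m:ℝ)) := by
    nlinarith [mul_pos (sub_pos.mpr hnm1) (lt_trans (by linarith : (0:ℝ) < (m:ℝ)) hmn)]
  nlinarith [mul_lt_mul_of_pos_left hkey (sub_pos.mpr hmn)]
end

section
/- Let m be a positive integer, m³ < N < (m+1)³, n = N^(1/3), d₁ = N − m³, d₂ = (m+1)³ − N. Then n > ((m+1)d₁ + m·d₂)/(d₁ + d₂) = m + d₁/(3m(m+1)+1). -/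
theorem cube_chord_lower_bound (m : ℕ) (hm : 1 ≤ m) (N n d₁ d₂ : ℝ)
    (h₁ : (m:ℝ)^3 < N) (h₂ : N < ((m:ℝ)+1)^3) (hn : n = N ^ ((1:ℝ)/3))
    (hd₁ : d₁ = N - (m:ℝ)^3) (hd₂ : d₂ = ((m:ℝ)+1)^3 - N) :
    n > (((m:ℝ)+1)*d₁ + (m:ℝ)*d₂)/(d₁ + d₂) ∧
    (((m:ℝ)+1)*d₁ + (m:ℝ)*d₂)/(d₁ + d₂) = (m:ℝ) + d₁/(3*(m:ℝ)*((m:ℝ)+1)+1) := by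
  have hm1 : (1:ℝ) ≤ (m:ℝ) := by exact_mod_cast hm
  have hD : d₁ + d₂ = 3*(m:ℝ)*((m:ℝ)+1)+1 := by rw [hd₁, hd₂]; ring
  have hDpos : (0:ℝ) < 3*(m:ℝ)*((m:ℝ)+1)+1 := by nlinarith
  have hd1pos : 0 < d₁ := by rw [hd₁]; linarith
  have hd2pos : 0 < d₂ := by rw [hd₂]; linarith
  have heq : (((m:ℝ)+1)*d₁ + (m:ℝ)*d₂)/(d₁ + d₂) = (m:ℝ) + d₁/(3*(m:ℝ)*((m:ℝ)+1)+1) := by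
    have hd2' : d₂ = 3*(m:ℝ)*((m:ℝ)+1)+1 - d₁ := by linarith
    rw [hD, hd2']
    field_simp
    ring
  refine ⟨?_, heq⟩
  rw [heq]
  set t : ℝ := d₁/(3*(m:ℝ)*((m:ℝ)+1)+1) with ht
  have ht0 : 0 < t := div_pos hd1pos hDpos
  have ht1 : t < 1 := by
    rw [ht, div_lt_one hDpos]
    linarith [hD ▸ (by linarith : d₁ < d₁ + d₂)]
  have htd : t * (3*(m:ℝ)*((m:ℝ)+1)+1) = d₁ := by
    rw [ht]; field_simp
  have hc3 : ((m:ℝ) + t)^3 < N := by nlinarith [mul_pos (mul_pos ht0 (show (0:ℝ) < 1 - t by linarith)) (show (0:ℝ) < 1 + t by linarith), mul_pos (mul_pos (show (0:ℝ) < (m:ℝ) by linarith) ht0) (show (0:ℝ) < 1 - t by linarith)]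
  have hNpos : 0 < N := by nlinarith
  have hn3 : n^3 = N := by
    rw [hn, ← Real.rpow_natCast (N ^ ((1:ℝ)/3)) 3, ← Real.rpow_mul hNpos.le]
    norm_num
  by_contra h
  push_neg at h
  have hn0 : 0 ≤ n := by rw [hn]; exact Real.rpow_nonneg hNpos.le _
  have := pow_le_pow_left₀ hn0 h 3
  rw [hn3] at this
  nlinarith
end

section
/- Let m be a positive integer, m³ < N < (m+1)³, n = N^(1/3), d₁ = N − m³, d₂ = (m+1)³ − N. If n² > m(m+1), then n < m + (m+1)d₁/((m+1)d₁ + m·d₂); if n² < m(m+1), then n > m + (m+1)d₁/((m+1)d₁ + m·d₂). -/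
theorem heron_contingent_bound (m : ℕ) (hm : 1 ≤ m) (N n d₁ d₂ : ℝ)
    (h₁ : (m:ℝ)^3 < N) (h₂ : N < ((m:ℝ)+1)^3) (hn : n = N ^ ((1:ℝ)/3))
    (hd₁ : d₁ = N - (m:ℝ)^3) (hd₂ : d₂ = ((m:ℝ)+1)^3 - N) :
    (n^2 > (m:ℝ)*((m:ℝ)+1) → n < (m:ℝ) + ((m:ℝ)+1)*d₁/(((m:ℝ)+1)*d₁ + (m:ℝ)*d₂)) ∧
    (n^2 < (m:ℝ)*((m:ℝ)+1) → n > (m:ℝ) + ((m:ℝ)+1)*d₁/(((m:ℝ)+1)*d₁ + (m:ℝ)*d₂)) := by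
  have hm1 : (1:ℝ) ≤ (m:ℝ) := by exact_mod_cast hm
  have hN0 : (0:ℝ) < N := lt_trans (by positivity) h₁
  have hn0 : 0 ≤ n := by rw [hn]; positivity
  have hn3 : n ^ 3 = N := by
    rw [hn, ← Real.rpow_natCast (N ^ ((1:ℝ)/3)) 3, ← Real.rpow_mul hN0.le]
    norm_num
  have hmn : (m:ℝ) < n := by
    apply lt_of_pow_lt_pow_left₀ 3 hn0
    rw [hn3]; exact h₁
  have hnm1 : n < (m:ℝ) + 1 := by
    nlinarith [sq_nonneg (n - m), sq_nonneg (n + m + 1), sq_nonneg n]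
  subst hd₁ hd₂
  have hD : 0 < ((m:ℝ)+1)*(N - (m:ℝ)^3) + (m:ℝ)*(((m:ℝ)+1)^3 - N) := by
    nlinarith
  constructor
  · intro hgt
    rw [← sub_lt_iff_lt_add', lt_div_iff₀ hD]
    nlinarith [mul_pos (sub_pos.2 hmn) (sub_pos.2 hnm1),
      mul_pos (mul_pos (sub_pos.2 hmn) (sub_pos.2 hnm1)) (sub_pos.2 hgt)]
  · intro hlt
    rw [gt_iff_lt, ← lt_sub_iff_add_lt', div_lt_iff₀ hD]
    nlinarith [mul_pos (sub_pos.2 hmn) (sub_pos.2 hnm1),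
      mul_pos (mul_pos (sub_pos.2 hmn) (sub_pos.2 hnm1)) (sub_pos.2 hlt)]
end

section
/- If N > (m + 1/2)³ with m a positive integer and m³ < N < (m+1)³, then N² > m³(m+1)³, and hence Heron's approximation m + (m+1)d₁/((m+1)d₁ + m·d₂) is an upper bound for N^(1/3), where d₁ = N − m³, d₂ = (m+1)³ − N. -/
theorem heron_upper_of_large_N (m : ℕ) (hm : 1 ≤ m) (N n d₁ d₂ : ℝ)
    (h₁ : (m:ℝ)^3 < N) (h₂ : N < ((m:ℝ)+1)^3) (hn : n = N ^ ((1:ℝ)/3))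
    (hd₁ : d₁ = N - (m:ℝ)^3) (hd₂ : d₂ = ((m:ℝ)+1)^3 - N)
    (hN : N > ((m:ℝ) + 1/2)^3) :
    N^2 > (m:ℝ)^3*((m:ℝ)+1)^3 ∧
    n < (m:ℝ) + ((m:ℝ)+1)*d₁/(((m:ℝ)+1)*d₁ + (m:ℝ)*d₂) := by
  have hm' : (1:ℝ) ≤ m := by exact_mod_cast hm
  set a : ℝ := (m:ℝ) with ha
  have hNpos : 0 < N := lt_trans (by positivity) h₁
  have hd1 : 0 < d₁ := by rw [hd₁]; linarith
  have hd2 : 0 < d₂ := by rw [hd₂]; linarith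
  have hD : 0 < (a+1)*d₁ + a*d₂ := by positivity
  have hb : a*(a+1) ≤ (a+1/2)^2 := by nlinarith
  have h6 : (a*(a+1))^3 ≤ ((a+1/2)^2)^3 := pow_le_pow_left₀ (by positivity) hb 3
  have hprod := mul_pos (sub_pos.mpr hN) (by positivity : (0:ℝ) < N + (a+1/2)^3)
  have key : N^2 > a^3*(a+1)^3 := by nlinarith [h6, hprod]
  refine ⟨key, ?_⟩
  have hn3 : n^3 = N := by
    rw [hn, ← Real.rpow_natCast (N ^ ((1:ℝ)/3)) 3, ← Real.rpow_mul hNpos.le]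
    norm_num
  have hnnn : 0 ≤ n := by rw [hn]; positivity
  set R : ℝ := a + (a+1)*d₁/((a+1)*d₁ + a*d₂) with hR
  have hRpos : 0 < R := by
    rw [hR]
    have h0 : 0 < a := by linarith
    positivity
  have hcube : N < R^3 := by
    have hRe : R = ((a+1)^2*d₁ + a^2*d₂)/((a+1)*d₁ + a*d₂) := by
      rw [hR]; field_simp; ring
    rw [hRe, div_pow, lt_div_iff₀ (by positivity)]
    have P := mul_pos (mul_pos hd1 hd2) (sub_pos.mpr key)
    rw [hd₁, hd₂] at P ⊢
    nlinarith [P]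
  by_contra h
  push_neg at h
  have : R^3 ≤ n^3 := pow_le_pow_left₀ hRpos.le h 3
  rw [hn3] at this
  linarith
end

section
/- Let m be a positive integer, m³ < N < (m+1)³, n = N^(1/3), d₁ = N − m³, d₂ = (m+1)³ − N. Then n < ((m+1)³d₁ + m³d₂)/((m+1)²d₁ + m²d₂) throughout the whole range. -/
theorem cube_upper_bound_22 (m : ℕ) (hm : 1 ≤ m) (N n d₁ d₂ : ℝ)
    (h₁ : (m:ℝ)^3 < N) (h₂ : N < ((m:ℝ)+1)^3) (hn : n = N ^ ((1:ℝ)/3))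
    (hd₁ : d₁ = N - (m:ℝ)^3) (hd₂ : d₂ = ((m:ℝ)+1)^3 - N) :
    n < (((m:ℝ)+1)^3*d₁ + (m:ℝ)^3*d₂)/(((m:ℝ)+1)^2*d₁ + (m:ℝ)^2*d₂) := by
  have hm1 : (1:ℝ) ≤ (m:ℝ) := by exact_mod_cast hm
  have hN : 0 < N := lt_trans (by positivity) h₁
  have hcube : n ^ 3 = N := by
    rw [hn, ← Real.rpow_natCast (N ^ ((1:ℝ)/3)) 3, ← Real.rpow_mul hN.le]
    norm_num
  have hn0 : 0 ≤ n := by rw [hn]; positivity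
  have hmn : (m:ℝ) < n := by
    refine lt_of_pow_lt_pow_left₀ 3 hn0 ?_
    rw [hcube]; exact h₁
  have hnm1 : n < (m:ℝ) + 1 := by
    refine lt_of_pow_lt_pow_left₀ 3 (by positivity) ?_
    rw [hcube]; exact h₂
  have hd1 : 0 < d₁ := by rw [hd₁]; linarith
  have hd2 : 0 < d₂ := by rw [hd₂]; linarith
  have hD : 0 < ((m:ℝ)+1)^2*d₁ + (m:ℝ)^2*d₂ := by positivity
  rw [lt_div_iff₀ hD]
  have hnpos : 0 < n := lt_of_le_of_lt (by positivity) hmn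
  have key : 0 < (((m:ℝ)+1) - n) * (n - (m:ℝ)) := mul_pos (by linarith) (by linarith)
  have hpos : 0 < (2*(m:ℝ)+1)*n^2 + (m:ℝ)*((m:ℝ)+1)*n := by positivity
  subst hd₁ hd₂
  rw [← hcube] at *
  nlinarith [mul_pos key hpos]
end

section
/- Let m be a positive integer, n real with m < n < m+1, Δ₁ = (n³−m³) − (n−m)³, Δ₂ = ((m+1)³−n³) − (m+1−n)³. Then for i = 1 and i = 2, (m+1)^i·Δ₁ + m^i·Δ₂ = 3m(m+1)n^i, and consequently n = m + (m+1)Δ₁/((m+1)Δ₁ + m·Δ₂). -/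
theorem enestrom_identity (m : ℕ) (hm : 1 ≤ m) (n Δ₁ Δ₂ : ℝ)
    (h₁ : (m:ℝ) < n) (h₂ : n < (m:ℝ)+1)
    (hΔ₁ : Δ₁ = (n^3 - (m:ℝ)^3) - (n-(m:ℝ))^3)
    (hΔ₂ : Δ₂ = (((m:ℝ)+1)^3 - n^3) - ((m:ℝ)+1-n)^3) :
    (∀ i : ℕ, i = 1 ∨ i = 2 →
      ((m:ℝ)+1)^i*Δ₁ + (m:ℝ)^i*Δ₂ = 3*(m:ℝ)*((m:ℝ)+1)*n^i) ∧
    n = (m:ℝ) + ((m:ℝ)+1)*Δ₁/(((m:ℝ)+1)*Δ₁ + (m:ℝ)*Δ₂) := by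
  have hm' : (1:ℝ) ≤ (m:ℝ) := by exact_mod_cast hm
  have hmpos : (0:ℝ) < (m:ℝ) := by linarith
  have hnpos : (0:ℝ) < n := by linarith
  have hden : ((m:ℝ)+1)*Δ₁ + (m:ℝ)*Δ₂ = 3*(m:ℝ)*((m:ℝ)+1)*n := by
    subst hΔ₁ hΔ₂; ring
  constructor
  · rintro i (rfl | rfl)
    · simpa using hden
    · subst hΔ₁ hΔ₂; ring
  · rw [hden]
    have h3 : 3*(m:ℝ)*((m:ℝ)+1)*n ≠ 0 := by positivity
    field_simp
    subst hΔ₁ hΔ₂; ring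
end

section
/- Let m be a positive integer, m³ < N < (m+1)³, n = N^(1/3), d₁ = N − m³, d₂ = (m+1)³ − N. Then ((m+1)²d₁ + m²d₂)/((m+1)d₁ + m·d₂) − n = (n² − m(m+1))(n−m)(m+1−n)/((m+1)d₁ + m·d₂). -/
theorem heron_error_identity (m : ℕ) (hm : 1 ≤ m) (N n d₁ d₂ : ℝ)
    (h₁ : (m:ℝ)^3 < N) (h₂ : N < ((m:ℝ)+1)^3) (hn : n = N ^ ((1:ℝ)/3))
    (hd₁ : d₁ = N - (m:ℝ)^3) (hd₂ : d₂ = ((m:ℝ)+1)^3 - N) :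
    (((m:ℝ)+1)^2*d₁ + (m:ℝ)^2*d₂)/(((m:ℝ)+1)*d₁ + (m:ℝ)*d₂) - n =
      (n^2 - (m:ℝ)*((m:ℝ)+1))*(n-(m:ℝ))*((m:ℝ)+1-n)/(((m:ℝ)+1)*d₁ + (m:ℝ)*d₂) := by
  have hm1 : (1:ℝ) ≤ (m:ℝ) := by exact_mod_cast hm
  have hN0 : (0:ℝ) < N := lt_trans (by positivity) h₁
  have hn3 : n ^ 3 = N := by
    rw [hn, ← Real.rpow_natCast (N ^ ((1:ℝ)/3)) 3, ← Real.rpow_mul hN0.le]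
    norm_num
  subst hd₁ hd₂
  have hden : (((m:ℝ)+1)*(N - (m:ℝ)^3) + (m:ℝ)*(((m:ℝ)+1)^3 - N)) > 0 := by nlinarith
  field_simp
  rw [← hn3]; ring
end

section
/- Let m be a positive integer, m³ < N < (m+1)³, n = N^(1/3), d₁ = N − m³, d₂ = (m+1)³ − N. Then |((m+1)²d₁ + m²d₂)/((m+1)d₁ + m·d₂) − n| < 1/(12m²). -/
set_option maxHeartbeats 1000000 in
theorem heron_error_bound (m : ℕ) (hm : 1 ≤ m) (N n d₁ d₂ : ℝ)
    (h₁ : (m:ℝ)^3 < N) (h₂ : N < ((m:ℝ)+1)^3) (hn : n = N ^ ((1:ℝ)/3))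
    (hd₁ : d₁ = N - (m:ℝ)^3) (hd₂ : d₂ = ((m:ℝ)+1)^3 - N) :
    |(((m:ℝ)+1)^2*d₁ + (m:ℝ)^2*d₂)/(((m:ℝ)+1)*d₁ + (m:ℝ)*d₂) - n| <
      1/(12*(m:ℝ)^2) := by
  have hm1 : (1:ℝ) ≤ (m:ℝ) := by exact_mod_cast hm
  have hN0 : (0:ℝ) < N := by nlinarith
  have hn0 : 0 ≤ n := by rw [hn]; exact Real.rpow_nonneg hN0.le _
  have hn3 : n ^ 3 = N := by
    rw [hn, ← Real.rpow_natCast (N ^ ((1:ℝ)/3)) 3, ← Real.rpow_mul hN0.le]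
    norm_num
  have hlow : (m:ℝ) < n := by
    by_contra h
    push_neg at h
    have := pow_le_pow_left₀ hn0 h 3
    rw [hn3] at this
    linarith
  have hhigh : n < (m:ℝ) + 1 := by
    by_contra h
    push_neg at h
    have := pow_le_pow_left₀ (by linarith : (0:ℝ) ≤ (m:ℝ)+1) h 3
    rw [hn3] at this
    linarith
  have hD : ((m:ℝ)+1)*d₁ + (m:ℝ)*d₂ = n^3 + (m:ℝ)*((m:ℝ)+1)*(2*(m:ℝ)+1) := by
    rw [hd₁, hd₂, ← hn3]; ring
  have hDbig : 3*(m:ℝ)^2*((m:ℝ)+1) < ((m:ℝ)+1)*d₁ + (m:ℝ)*d₂ := by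
    rw [hD, hn3]; nlinarith
  have hDpos : 0 < ((m:ℝ)+1)*d₁ + (m:ℝ)*d₂ := by nlinarith
  have hNum : (((m:ℝ)+1)^2*d₁ + (m:ℝ)^2*d₂) - n * (((m:ℝ)+1)*d₁ + (m:ℝ)*d₂)
      = (n - m) * (((m:ℝ)+1) - n) * (n^2 - (m:ℝ)*((m:ℝ)+1)) := by
    rw [hd₁, hd₂, ← hn3]; ring
  have hab : (n - m) * (((m:ℝ)+1) - n) ≤ 1/4 := by nlinarith [sq_nonneg (2*n - 2*m - 1)]
  have hq : |n^2 - (m:ℝ)*((m:ℝ)+1)| ≤ (m:ℝ)+1 := by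
    rw [abs_le]
    constructor <;> nlinarith
  have key : (((m:ℝ)+1)^2*d₁ + (m:ℝ)^2*d₂)/(((m:ℝ)+1)*d₁ + (m:ℝ)*d₂) - n
      = ((n - m) * (((m:ℝ)+1) - n) * (n^2 - (m:ℝ)*((m:ℝ)+1))) / (((m:ℝ)+1)*d₁ + (m:ℝ)*d₂) := by
    rw [← hNum]
    field_simp
  rw [key, abs_div, abs_of_pos hDpos, div_lt_div_iff₀ hDpos (by positivity)]
  have habs : |(n - m) * (((m:ℝ)+1) - n) * (n^2 - (m:ℝ)*((m:ℝ)+1))|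
      = (n - m) * (((m:ℝ)+1) - n) * |n^2 - (m:ℝ)*((m:ℝ)+1)| := by
    rw [abs_mul, abs_mul, abs_of_pos (by linarith : (0:ℝ) < n - m),
      abs_of_pos (by linarith : (0:ℝ) < ((m:ℝ)+1) - n)]
  rw [habs]
  have h5 : (n - m) * (((m:ℝ)+1) - n) * |n^2 - (m:ℝ)*((m:ℝ)+1)| ≤ (1/4) * ((m:ℝ)+1) :=
    mul_le_mul hab hq (abs_nonneg _) (by norm_num)
  have h6 := mul_le_mul_of_nonneg_right h5 (show (0:ℝ) ≤ 12*(m:ℝ)^2 by positivity)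
  nlinarith [h6, hDbig]
end
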